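/- Under the discrete-time weighted-average consensus update rule x_i[k+1] = x_i[k] + (ε/w_i)·Σ_{j ∈ N_i} a_ij^(k)·(x_j[k] − x_i[k]), with positive node weights w_i, symmetric time-varying coupling weights bounded between positive constants δ and ā < 1 on every edge, and step size ε satisfying 0 < ε < (min_i w_i)/Δ where Δ is the maximum degree, every node's state converges as k → ∞ to the weighted average of the initial states: lim_{k→∞} x_i[k] = (Σ_{j=1}^n w_j x_j[0]) / (Σ_{j=1}^n w_j) for every node i. -/

import Mathlib

open Filter Topology

/-- Discrete-time weighted-average consensus with positive node weights,
symmetric time-varying coupling weights in [δ, ā] with 0 < δ ≤ ā < 1, and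
step size 0 < ε < (min_i w_i)/Δ: every node's state converges to the weighted
average of the initial states. -/
theorem dt_weighted_average_consensus
    (n : ℕ) (hn : 2 ≤ n)
    (G : SimpleGraph (Fin n)) [DecidableRel G.Adj]
    (hconn : G.Connected)
    (w : Fin n → ℝ) (hw : ∀ i, 0 < w i)
    (x : ℕ → Fin n → ℝ)
    (a : ℕ → Fin n → Fin n → ℝ)
    (ha_symm : ∀ k i j, a k i j = a k j i)
    (δ abar : ℝ) (hδ : 0 < δ) (hδa : δ ≤ abar) (habar : abar < 1)
    (hbound : ∀ k i j, G.Adj i j → δ ≤ a k i j ∧ a k i j ≤ abar)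
    (ε : ℝ) (hε : 0 < ε)
    (hεΔ : ε < (Finset.univ.inf' (Finset.univ_nonempty_iff.mpr ⟨⟨0, by omega⟩⟩) w)
              / (G.maxDegree : ℝ))
    (hdyn : ∀ i k, x (k + 1) i =
      x k i + (ε / w i) * ∑ j ∈ G.neighborFinset i, a k i j * (x k j - x k i)) :
    ∀ i, Tendsto (fun k => x k i) atTop
      (𝓝 ((∑ j, w j * x 0 j) / (∑ j, w j))) := by
  classical
  have hne : (Finset.univ : Finset (Fin n)).Nonempty := ⟨⟨0, by omega⟩, Finset.mem_univ _⟩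
  set M : ℕ → ℝ := fun k => Finset.univ.sup' hne (x k) with hMdef
  set m : ℕ → ℝ := fun k => Finset.univ.inf' hne (x k) with hmdef
  have hxM : ∀ k l, x k l ≤ M k := fun k l => Finset.le_sup' (x k) (Finset.mem_univ l)
  have hmx : ∀ k l, m k ≤ x k l := fun k l => Finset.inf'_le (x k) (Finset.mem_univ l)
  -- weight bounds
  set wmin : ℝ := Finset.univ.inf' hne w with hwmindef
  set wmax : ℝ := Finset.univ.sup' hne w with hwmaxdef
  have hwmin_le : ∀ i, wmin ≤ w i := fun i => Finset.inf'_le w (Finset.mem_univ i)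
  have hle_wmax : ∀ i, w i ≤ wmax := fun i => Finset.le_sup' w (Finset.mem_univ i)
  have hwmin_pos : 0 < wmin := by
    obtain ⟨i, _, hi⟩ := Finset.exists_mem_eq_inf' hne w
    rw [hwmindef, hi]; exact hw i
  have hwmax_pos : 0 < wmax := lt_of_lt_of_le hwmin_pos (le_trans (hwmin_le ⟨0, by omega⟩) (hle_wmax _))
  have hεΔ' : ε < wmin / (G.maxDegree : ℝ) := hεΔ
  have hΔpos : (0:ℝ) < (G.maxDegree : ℝ) := by
    rcases Nat.eq_zero_or_pos G.maxDegree with h | h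
    · rw [h] at hεΔ'; norm_num at hεΔ'; linarith
    · exact_mod_cast h
  have hεΔmul : ε * (G.maxDegree : ℝ) < wmin := (lt_div_iff₀ hΔpos).mp hεΔ'
  -- the uniform coefficient lower bound
  set θ : ℝ := min (ε * δ / wmax) (1 - abar) with hθdef
  have hθpos : 0 < θ := lt_min (div_pos (mul_pos hε hδ) hwmax_pos) (by linarith)
  have hθle : θ ≤ 1 - abar := min_le_right _ _
  have hθ1 : θ < 1 := lt_of_le_of_lt hθle (by linarith)
  -- bounds on the coupling sums
  have hadj : ∀ (i : Fin n) (j : Fin n), j ∈ G.neighborFinset i → G.Adj i j :=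
    fun i j hj => (SimpleGraph.mem_neighborFinset G i j).mp hj
  have hsum_nonneg : ∀ k i, 0 ≤ ∑ j ∈ G.neighborFinset i, a k i j := by
    intro k i
    exact Finset.sum_nonneg fun j hj => le_trans hδ.le (hbound k i j (hadj i j hj)).1
  have hsum_le : ∀ k i, ∑ j ∈ G.neighborFinset i, a k i j ≤ (G.maxDegree : ℝ) * abar := by
    intro k i
    calc ∑ j ∈ G.neighborFinset i, a k i j
        ≤ ∑ _j ∈ G.neighborFinset i, abar :=
          Finset.sum_le_sum fun j hj => (hbound k i j (hadj i j hj)).2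
      _ = (G.degree i : ℝ) * abar := by
          rw [Finset.sum_const, SimpleGraph.card_neighborFinset_eq_degree]
          simp [nsmul_eq_mul]
      _ ≤ (G.maxDegree : ℝ) * abar := by
          have h1 : (G.degree i : ℝ) ≤ (G.maxDegree : ℝ) := by
            exact_mod_cast G.degree_le_maxDegree i
          nlinarith
  have hc_nonneg : ∀ k i, 0 ≤ (ε / w i) * ∑ j ∈ G.neighborFinset i, a k i j := by
    intro k i
    exact mul_nonneg (div_nonneg hε.le (hw i).le) (hsum_nonneg k i)
  have hc_le : ∀ k i, (ε / w i) * ∑ j ∈ G.neighborFinset i, a k i j ≤ abar := by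
    intro k i
    have h1 : (ε / w i) * ∑ j ∈ G.neighborFinset i, a k i j
        ≤ (ε / w i) * ((G.maxDegree : ℝ) * abar) :=
      mul_le_mul_of_nonneg_left (hsum_le k i) (div_nonneg hε.le (hw i).le)
    have h2 : (ε / w i) * ((G.maxDegree : ℝ) * abar) ≤ abar := by
      rw [div_mul_eq_mul_div, div_le_iff₀ (hw i)]
      have := hwmin_le i
      nlinarith
    linarith
  have hcoeff_lb : ∀ k i j, G.Adj i j → θ ≤ (ε / w i) * a k i j := by
    intro k i j hij
    have h1 : θ ≤ ε * δ / wmax := min_le_left _ _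
    have h2 : ε * δ / wmax ≤ (ε / w i) * a k i j := by
      rw [div_mul_eq_mul_div, div_le_div_iff₀ hwmax_pos (hw i)]
      have hδle := (hbound k i j hij).1
      have h3 : ε * δ * w i ≤ ε * δ * wmax :=
        mul_le_mul_of_nonneg_left (hle_wmax i) (mul_pos hε hδ).le
      have h4 : ε * δ * wmax ≤ ε * a k i j * wmax :=
        mul_le_mul_of_nonneg_right (mul_le_mul_of_nonneg_left hδle hε.le) hwmax_pos.le
      linarith
    linarith
  -- key algebraic identity
  have key : ∀ k i (B : ℝ), x (k+1) i - B =
      (1 - (ε / w i) * ∑ j ∈ G.neighborFinset i, a k i j) * (x k i - B)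
      + ∑ j ∈ G.neighborFinset i, (ε / w i) * (a k i j * (x k j - B)) := by
    intro k i B
    have hexp : ∑ j ∈ G.neighborFinset i, (ε / w i) * (a k i j * (x k j - B))
        = (ε / w i) * ∑ j ∈ G.neighborFinset i, a k i j * (x k j - x k i)
          + ((ε / w i) * ∑ j ∈ G.neighborFinset i, a k i j) * (x k i - B) := by
      rw [Finset.mul_sum, Finset.mul_sum, Finset.sum_mul, ← Finset.sum_add_distrib]
      exact Finset.sum_congr rfl fun j _ => by ring
    rw [hexp, hdyn i k]; ring
  -- one-step upper bound
  have hub : ∀ k i j, (j = i ∨ G.Adj i j) → x (k+1) i ≤ (1 - θ) * M k + θ * x k j := by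
    intro k i j hj
    have hkey := key k i (M k)
    have hterm : ∀ l ∈ G.neighborFinset i, (ε / w i) * (a k i l * (x k l - M k)) ≤ 0 := by
      intro l hl
      have ha0 : 0 ≤ a k i l := le_trans hδ.le (hbound k i l (hadj i l hl)).1
      have := hxM k l
      have h1 : a k i l * (x k l - M k) ≤ 0 := mul_nonpos_of_nonneg_of_nonpos ha0 (by linarith)
      exact mul_nonpos_of_nonneg_of_nonpos (div_nonneg hε.le (hw i).le) h1
    have hfin : x (k+1) i - M k ≤ θ * (x k j - M k) := by
      rcases hj with hji | hjadj
      · subst hji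
        have hS : ∑ l ∈ G.neighborFinset j, (ε / w j) * (a k j l * (x k l - M k)) ≤ 0 :=
          Finset.sum_nonpos hterm
        have hA : (1 - (ε / w j) * ∑ l ∈ G.neighborFinset j, a k j l) * (x k j - M k)
            ≤ θ * (x k j - M k) := by
          have h1 : θ ≤ 1 - (ε / w j) * ∑ l ∈ G.neighborFinset j, a k j l := by
            have := hc_le k j; linarith
          exact mul_le_mul_of_nonpos_right h1 (by have := hxM k j; linarith)
        linarith
      · have hjmem : j ∈ G.neighborFinset i := (SimpleGraph.mem_neighborFinset G i j).mpr hjadj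
        have hA : (1 - (ε / w i) * ∑ l ∈ G.neighborFinset i, a k i l) * (x k i - M k) ≤ 0 := by
          have h1 : 0 ≤ 1 - (ε / w i) * ∑ l ∈ G.neighborFinset i, a k i l := by
            have := hc_le k i; linarith
          exact mul_nonpos_of_nonneg_of_nonpos h1 (by have := hxM k i; linarith)
        have hsplit : (ε / w i) * (a k i j * (x k j - M k))
              + ∑ l ∈ (G.neighborFinset i).erase j, (ε / w i) * (a k i l * (x k l - M k))
            = ∑ l ∈ G.neighborFinset i, (ε / w i) * (a k i l * (x k l - M k)) :=
          Finset.add_sum_erase _ (fun l => (ε / w i) * (a k i l * (x k l - M k))) hjmem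
        have hrest : ∑ l ∈ (G.neighborFinset i).erase j, (ε / w i) * (a k i l * (x k l - M k)) ≤ 0 :=
          Finset.sum_nonpos fun l hl => hterm l (Finset.mem_of_mem_erase hl)
        have hfj : (ε / w i) * (a k i j * (x k j - M k)) ≤ θ * (x k j - M k) := by
          have h1 : θ ≤ (ε / w i) * a k i j := hcoeff_lb k i j hjadj
          have h2 := mul_le_mul_of_nonpos_right h1 (by have := hxM k j; linarith : x k j - M k ≤ 0)
          calc (ε / w i) * (a k i j * (x k j - M k))
              = (ε / w i) * a k i j * (x k j - M k) := by ring
            _ ≤ θ * (x k j - M k) := h2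
        linarith
    have hring : (1 - θ) * M k + θ * x k j = M k + θ * (x k j - M k) := by ring
    rw [hring]; linarith
  -- one-step lower bound
  have hlb : ∀ k i j, (j = i ∨ G.Adj i j) → (1 - θ) * m k + θ * x k j ≤ x (k+1) i := by
    intro k i j hj
    have hkey := key k i (m k)
    have hterm : ∀ l ∈ G.neighborFinset i, 0 ≤ (ε / w i) * (a k i l * (x k l - m k)) := by
      intro l hl
      have ha0 : 0 ≤ a k i l := le_trans hδ.le (hbound k i l (hadj i l hl)).1
      have := hmx k l
      exact mul_nonneg (div_nonneg hε.le (hw i).le) (mul_nonneg ha0 (by linarith))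
    have hfin : θ * (x k j - m k) ≤ x (k+1) i - m k := by
      rcases hj with hji | hjadj
      · subst hji
        have hS : 0 ≤ ∑ l ∈ G.neighborFinset j, (ε / w j) * (a k j l * (x k l - m k)) :=
          Finset.sum_nonneg hterm
        have hA : θ * (x k j - m k)
            ≤ (1 - (ε / w j) * ∑ l ∈ G.neighborFinset j, a k j l) * (x k j - m k) := by
          have h1 : θ ≤ 1 - (ε / w j) * ∑ l ∈ G.neighborFinset j, a k j l := by
            have := hc_le k j; linarith
          exact mul_le_mul_of_nonneg_right h1 (by have := hmx k j; linarith)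
        linarith
      · have hjmem : j ∈ G.neighborFinset i := (SimpleGraph.mem_neighborFinset G i j).mpr hjadj
        have hA : 0 ≤ (1 - (ε / w i) * ∑ l ∈ G.neighborFinset i, a k i l) * (x k i - m k) := by
          have h1 : 0 ≤ 1 - (ε / w i) * ∑ l ∈ G.neighborFinset i, a k i l := by
            have := hc_le k i; linarith
          exact mul_nonneg h1 (by have := hmx k i; linarith)
        have hsplit : (ε / w i) * (a k i j * (x k j - m k))
              + ∑ l ∈ (G.neighborFinset i).erase j, (ε / w i) * (a k i l * (x k l - m k))
            = ∑ l ∈ G.neighborFinset i, (ε / w i) * (a k i l * (x k l - m k)) :=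
          Finset.add_sum_erase _ (fun l => (ε / w i) * (a k i l * (x k l - m k))) hjmem
        have hrest : 0 ≤ ∑ l ∈ (G.neighborFinset i).erase j, (ε / w i) * (a k i l * (x k l - m k)) :=
          Finset.sum_nonneg fun l hl => hterm l (Finset.mem_of_mem_erase hl)
        have hfj : θ * (x k j - m k) ≤ (ε / w i) * (a k i j * (x k j - m k)) := by
          have h1 : θ ≤ (ε / w i) * a k i j := hcoeff_lb k i j hjadj
          have h2 := mul_le_mul_of_nonneg_right h1 (by have := hmx k j; linarith : 0 ≤ x k j - m k)
          calc θ * (x k j - m k) ≤ (ε / w i) * a k i j * (x k j - m k) := h2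
            _ = (ε / w i) * (a k i j * (x k j - m k)) := by ring
        linarith
    have hring : (1 - θ) * m k + θ * x k j = m k + θ * (x k j - m k) := by ring
    rw [hring]; linarith
  -- monotonicity of M and m
  have hMdec : ∀ k, M (k+1) ≤ M k := by
    intro k
    apply Finset.sup'_le
    intro i _
    have h1 := hub k i i (Or.inl rfl)
    have h2 := mul_le_mul_of_nonneg_left (hxM k i) hθpos.le
    nlinarith
  have hminc : ∀ k, m k ≤ m (k+1) := by
    intro k
    apply Finset.le_inf'
    intro i _
    have h1 := hlb k i i (Or.inl rfl)
    have h2 := mul_le_mul_of_nonneg_left (hmx k i) hθpos.le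
    nlinarith
  have hManti : Antitone M := antitone_nat_of_succ_le hMdec
  have hmmono : Monotone m := monotone_nat_of_le_succ hminc
  have hmM : ∀ k, m k ≤ M k := fun k => le_trans (hmx k ⟨0, by omega⟩) (hxM k ⟨0, by omega⟩)
  -- choose a minimizer at each time
  have hexmin : ∀ k : ℕ, ∃ j : Fin n, m k = x k j := by
    intro k
    obtain ⟨j, _, hj⟩ := Finset.exists_mem_eq_inf' hne (x k)
    exact ⟨j, hj⟩
  choose j0 hj0 using hexmin
  -- walk propagation
  have hprop : ∀ (k s : ℕ) (i : Fin n), (∃ p : G.Walk i (j0 k), p.length ≤ s) →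
      x (k + s) i ≤ (1 - θ^s) * M k + θ^s * m k := by
    intro k s
    induction s with
    | zero =>
      intro i ⟨p, hp⟩
      have hlen : p.length = 0 := Nat.le_zero.mp hp
      have hij : i = j0 k := SimpleGraph.Walk.eq_of_length_eq_zero hlen
      subst hij
      simp only [pow_zero, Nat.add_zero]
      linarith [hj0 k]
    | succ s ih =>
      intro i ⟨p, hp⟩
      cases p with
      | nil =>
        have h1 := ih (j0 k) ⟨SimpleGraph.Walk.nil, Nat.zero_le s⟩
        have h2 := hub (k+s) (j0 k) (j0 k) (Or.inl rfl)
        have hMk : M (k+s) ≤ M k := hManti (Nat.le_add_right k s)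
        calc x (k + (s+1)) (j0 k)
            ≤ (1 - θ) * M (k+s) + θ * x (k+s) (j0 k) := h2
          _ ≤ (1 - θ) * M k + θ * ((1 - θ^s) * M k + θ^s * m k) := by
              have h3 := mul_le_mul_of_nonneg_left h1 hθpos.le
              have h4 := mul_le_mul_of_nonneg_left hMk (by linarith : (0:ℝ) ≤ 1 - θ)
              linarith
          _ = (1 - θ^(s+1)) * M k + θ^(s+1) * m k := by ring
      | @cons _ b _ h q =>
        have hq : q.length ≤ s := by
          simp only [SimpleGraph.Walk.length_cons] at hp; omega
        have h1 := ih b ⟨q, hq⟩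
        have h2 := hub (k+s) i b (Or.inr h)
        have hMk : M (k+s) ≤ M k := hManti (Nat.le_add_right k s)
        calc x (k + (s+1)) i
            ≤ (1 - θ) * M (k+s) + θ * x (k+s) b := h2
          _ ≤ (1 - θ) * M k + θ * ((1 - θ^s) * M k + θ^s * m k) := by
              have h3 := mul_le_mul_of_nonneg_left h1 hθpos.le
              have h4 := mul_le_mul_of_nonneg_left hMk (by linarith : (0:ℝ) ≤ 1 - θ)
              linarith
          _ = (1 - θ^(s+1)) * M k + θ^(s+1) * m k := by ring
  set d : ℕ := n - 1 with hddef
  have hdpos : 0 < d := by omega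
  -- contraction of the spread over d steps
  have hcontract : ∀ k, M (k + d) - m (k + d) ≤ (1 - θ^d) * (M k - m k) := by
    intro k
    have hMbd : M (k + d) ≤ (1 - θ^d) * M k + θ^d * m k := by
      apply Finset.sup'_le
      intro i _
      obtain ⟨p⟩ := hconn.preconnected i (j0 k)
      have hlen : (p.toPath : G.Walk i (j0 k)).length ≤ d := by
        have := (p.toPath.2).length_lt
        simp only [Fintype.card_fin] at this
        omega
      exact hprop k d i ⟨p.toPath, hlen⟩
    have hmbd : m k ≤ m (k + d) := hmmono (Nat.le_add_right k d)
    have hr : (1 - θ^d) * (M k - m k) = ((1 - θ^d) * M k + θ^d * m k) - m k := by ring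
    rw [hr]; linarith
  set D : ℕ → ℝ := fun k => M k - m k with hDdef
  have hD0 : ∀ k, 0 ≤ D k := fun k => by simp only [hDdef]; linarith [hmM k]
  have hDanti : Antitone D := antitone_nat_of_succ_le fun k => by
    simp only [hDdef]; linarith [hMdec k, hminc k]
  set q : ℝ := 1 - θ^d with hqdef
  have hq0 : 0 ≤ q := by
    have : θ^d ≤ 1 := pow_le_one₀ hθpos.le hθ1.le
    simp only [hqdef]; linarith
  have hq1 : q < 1 := by
    have : 0 < θ^d := pow_pos hθpos d
    simp only [hqdef]; linarith
  have hgeo : ∀ t, D (d * t) ≤ q^t * D 0 := by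
    intro t
    induction t with
    | zero => simp
    | succ t ih =>
      have h1 : D (d * t + d) ≤ q * D (d * t) := hcontract (d * t)
      have h2 := mul_le_mul_of_nonneg_left ih hq0
      calc D (d * (t+1)) = D (d * t + d) := by ring_nf
        _ ≤ q * D (d * t) := h1
        _ ≤ q * (q^t * D 0) := h2
        _ = q^(t+1) * D 0 := by ring
  have hDbound : ∀ k, D k ≤ q^(k / d) * D 0 := by
    intro k
    have h1 : d * (k / d) ≤ k := by
      rw [Nat.mul_comm]
      exact Nat.div_mul_le_self k d
    exact le_trans (hDanti h1) (hgeo (k / d))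
  have hdiv : Tendsto (fun k : ℕ => k / d) atTop atTop := by
    apply Filter.tendsto_atTop_atTop.mpr
    intro b
    exact ⟨d * b, fun k hk => (Nat.le_div_iff_mul_le hdpos).mpr (by rw [Nat.mul_comm]; exact hk)⟩
  have hbound0 : Tendsto (fun k : ℕ => q^(k / d) * D 0) atTop (𝓝 0) := by
    have h1 := (tendsto_pow_atTop_nhds_zero_of_lt_one hq0 hq1).comp hdiv
    have h2 := h1.mul_const (D 0)
    rw [zero_mul] at h2
    exact h2
  have hDlim : Tendsto D atTop (𝓝 0) := squeeze_zero hD0 hDbound hbound0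
  -- limits of m and M
  have hmbdd : BddAbove (Set.range m) := by
    refine ⟨M 0, ?_⟩
    rintro _ ⟨k, rfl⟩
    exact le_trans (hmM k) (hManti (Nat.zero_le k))
  have hmlim : Tendsto m atTop (𝓝 (⨆ k, m k)) := tendsto_atTop_ciSup hmmono hmbdd
  set L : ℝ := ⨆ k, m k with hLdef
  have hMlim : Tendsto M atTop (𝓝 L) := by
    have h := hmlim.add hDlim
    rw [add_zero] at h
    refine h.congr fun k => ?_
    simp only [hDdef]; ring
  have hxlim : ∀ i, Tendsto (fun k => x k i) atTop (𝓝 L) := fun i =>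
    tendsto_of_tendsto_of_tendsto_of_le_of_le hmlim hMlim (fun k => hmx k i) (fun k => hxM k i)
  -- invariance of the weighted sum
  have hzero : ∀ k, ∑ i, ∑ j ∈ G.neighborFinset i, a k i j * (x k j - x k i) = 0 := by
    intro k
    set F : Fin n → Fin n → ℝ := fun i j => a k i j * (x k j - x k i) with hFdef
    have hswap : ∑ i, ∑ j ∈ G.neighborFinset i, F i j
        = ∑ i : Fin n, ∑ j : Fin n, if G.Adj i j then F i j else 0 := by
      refine Finset.sum_congr rfl fun i _ => ?_
      rw [SimpleGraph.neighborFinset_eq_filter, Finset.sum_filter]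
    have hswap2 : ∑ i, ∑ j ∈ G.neighborFinset i, F i j
        = ∑ i : Fin n, ∑ j : Fin n, if G.Adj j i then F j i else 0 := by
      rw [hswap, Finset.sum_comm]
    have hsum2 : (∑ i, ∑ j ∈ G.neighborFinset i, F i j)
        + (∑ i, ∑ j ∈ G.neighborFinset i, F i j) = 0 := by
      nth_rewrite 1 [hswap]
      nth_rewrite 1 [hswap2]
      rw [← Finset.sum_add_distrib]
      rw [Finset.sum_congr rfl fun i _ => (Finset.sum_add_distrib).symm]
      apply Finset.sum_eq_zero
      intro i _
      apply Finset.sum_eq_zero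
      intro j _
      by_cases hij : G.Adj i j
      · have hji : G.Adj j i := hij.symm
        simp only [hij, hji, if_true]
        simp only [hFdef]
        rw [ha_symm k j i]
        ring
      · have hji : ¬ G.Adj j i := fun hc => hij hc.symm
        simp [hij, hji]
    linarith
  have hinv : ∀ k, ∑ i, w i * x k i = ∑ i, w i * x 0 i := by
    intro k
    induction k with
    | zero => rfl
    | succ k ih =>
      have hstep : ∑ i, w i * x (k+1) i
          = ∑ i, (w i * x k i + ε * ∑ j ∈ G.neighborFinset i, a k i j * (x k j - x k i)) := by
        refine Finset.sum_congr rfl fun i _ => ?_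
        rw [hdyn i k]
        have hwne : w i ≠ 0 := (hw i).ne'
        field_simp
      rw [hstep, Finset.sum_add_distrib, ← Finset.mul_sum, hzero k, mul_zero, add_zero, ih]
  -- identify the limit
  have hsumlim : Tendsto (fun k => ∑ i, w i * x k i) atTop (𝓝 (∑ i, w i * L)) :=
    tendsto_finset_sum _ fun i _ => (hxlim i).const_mul (w i)
  have hconst : Tendsto (fun k => ∑ i, w i * x k i) atTop (𝓝 (∑ i, w i * x 0 i)) :=
    tendsto_const_nhds.congr fun k => (hinv k).symm
  have hLeq : ∑ i, w i * L = ∑ i, w i * x 0 i := tendsto_nhds_unique hsumlim hconst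
  have hwsum : 0 < ∑ i, w i := Finset.sum_pos (fun i _ => hw i) hne
  have hLval : L = (∑ j, w j * x 0 j) / (∑ j, w j) := by
    rw [eq_div_iff hwsum.ne', ← hLeq, Finset.mul_sum]
    exact Finset.sum_congr rfl fun i _ => by ring
  intro i
  rw [← hLval]
  exact hxlim i
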